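/- Let H be a complex Hilbert space with inner product ⟨·,·⟩ linear in the first variable, and let B be its open unit ball. For ν ∈ B define s_ν = (1 − ‖ν‖²)^{1/2}, P_ν z = (⟨z,ν⟩/⟨ν,ν⟩)ν for ν ≠ 0 and P_0 = 0, Q_ν = I − P_ν, and Φ_ν(z) = (ν − P_ν z − s_ν Q_ν z)/(1 − ⟨z,ν⟩). Then the function d_ph(μ,ν) := ‖Φ_ν(μ)‖ defines a metric on B; in particular d_ph is symmetric, i.e., ‖Φ_ν(μ)‖ = ‖Φ_μ(ν)‖ for all μ, ν ∈ B, it vanishes exactly when μ = ν, and it satisfies the triangle inequality. -/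

import Mathlib

open Metric

noncomputable section

open scoped Classical

variable {H : Type*} [NormedAddCommGroup H] [InnerProductSpace ℂ H]

/-- The projection `P_ν z = (⟨z,ν⟩/⟨ν,ν⟩)ν` (with the paper's inner product `⟨z,ν⟩`,
linear in the first variable, which is `⟪ν, z⟫_ℂ` in Mathlib's convention), and `P_0 = 0`. -/
def ballProj (ν z : H) : H :=
  if ν = 0 then 0 else ((inner ℂ ν z : ℂ) / (inner ℂ ν ν : ℂ)) • ν

/-- The Möbius map `Φ_ν(z) = (ν − P_ν z − s_ν Q_ν z)/(1 − ⟨z,ν⟩)` of the open unit ball of a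
complex Hilbert space, exchanging `ν` and `0`, where `s_ν = (1 − ‖ν‖²)^{1/2}` and
`Q_ν = I − P_ν`. -/
def ballMobius (ν z : H) : H :=
  (1 - (inner ℂ ν z : ℂ))⁻¹ •
    (ν - ballProj ν z - (Real.sqrt (1 - ‖ν‖ ^ 2) : ℂ) • (z - ballProj ν z))

/-- The pseudohyperbolic distance `d_ph(μ,ν) = ‖Φ_ν(μ)‖`. -/
def pseudohyperbolicDist (μ ν : H) : ℝ := ‖ballMobius ν μ‖

local notation "⟪" x ", " y "⟫" => @inner ℂ H _ x y

private lemma inner_self_c (x : H) : (inner ℂ x x : ℂ) = ((‖x‖ : ℝ) : ℂ)^2 :=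
  inner_self_eq_norm_sq_to_K x

private lemma conj_mul_c (w : ℂ) : (starRingEnd ℂ) w * w = ((‖w‖ : ℝ) : ℂ)^2 :=
  RCLike.conj_mul w

private lemma real_sq_eq {a b : ℝ} (ha : 0 ≤ a) (hb : 0 ≤ b) (h : a ^ 2 = b ^ 2) : a = b := by
  rw [← Real.sqrt_sq ha, ← Real.sqrt_sq hb, h]

/-- The key algebraic identity for the numerator of the Möbius map. -/
lemma ball_key (ν : H) (hν : ‖ν‖ ≤ 1) (μ lam : H) :
    ⟪ν - ballProj ν μ - (Real.sqrt (1 - ‖ν‖ ^ 2) : ℂ) • (μ - ballProj ν μ),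
      ν - ballProj ν lam - (Real.sqrt (1 - ‖ν‖ ^ 2) : ℂ) • (lam - ballProj ν lam)⟫
    = (1 - ⟪μ, ν⟫) * (1 - ⟪ν, lam⟫) - (1 - (‖ν‖:ℂ)^2) * (1 - ⟪μ, lam⟫) := by
  have h1 : (1:ℝ) - ‖ν‖^2 ≥ 0 := by nlinarith [norm_nonneg ν]
  by_cases h0 : ν = 0
  · simp [ballProj, h0, inner_smul_left, inner_smul_right, Complex.conj_ofReal,
      Real.sqrt_one]
  · have hb : (‖ν‖:ℂ) ≠ 0 := by
      simpa using (norm_ne_zero_iff.mpr h0)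
    simp only [ballProj, if_neg h0, inner_sub_left, inner_sub_right, inner_smul_left,
      inner_smul_right, map_div₀, inner_conj_symm, Complex.conj_ofReal, map_pow,
      inner_self_eq_norm_sq_to_K, RCLike.ofReal_eq_complex_ofReal]
    have hs : ((Real.sqrt (1 - ‖ν‖ ^ 2) : ℂ))^2 = 1 - (‖ν‖:ℂ)^2 := by
      rw [← Complex.ofReal_pow, Real.sq_sqrt h1]; push_cast; ring
    generalize (Real.sqrt (1 - ‖ν‖ ^ 2) : ℂ) = t at hs ⊢
    field_simp
    linear_combination ((‖ν‖:ℂ)^2 * (inner ℂ μ lam : ℂ) - (inner ℂ μ ν : ℂ) * (inner ℂ ν lam : ℂ)) * hs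

lemma one_sub_inner_ne_zero {μ ν : H} (hμ : ‖μ‖ < 1) (hν : ‖ν‖ < 1) :
    (1 : ℂ) - ⟪ν, μ⟫ ≠ 0 := by
  intro h
  have h2 : ‖(⟪ν, μ⟫ : ℂ)‖ = 1 := by
    have : (⟪ν, μ⟫ : ℂ) = 1 := by linear_combination -h
    simp [this]
  have h3 := norm_inner_le_norm (𝕜 := ℂ) ν μ
  nlinarith [norm_nonneg μ, norm_nonneg ν]

lemma norm_one_sub_inner_symm (μ ν : H) : ‖(1 : ℂ) - ⟪μ, ν⟫‖ = ‖(1 : ℂ) - ⟪ν, μ⟫‖ := by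
  rw [show (1 : ℂ) - ⟪μ, ν⟫ = (starRingEnd ℂ) ((1 : ℂ) - ⟪ν, μ⟫) by simp [inner_conj_symm]]
  exact RCLike.norm_conj _

/-- The squared-norm formula for the Möbius map. -/
lemma norm_sq_mobius {μ ν : H} (hμ : ‖μ‖ < 1) (hν : ‖ν‖ < 1) :
    pseudohyperbolicDist μ ν ^ 2 * ‖(1 : ℂ) - ⟪ν, μ⟫‖ ^ 2
      = ‖(1 : ℂ) - ⟪ν, μ⟫‖ ^ 2 - (1 - ‖μ‖ ^ 2) * (1 - ‖ν‖ ^ 2) := by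
  set n : H := ν - ballProj ν μ - (Real.sqrt (1 - ‖ν‖ ^ 2) : ℂ) • (μ - ballProj ν μ) with hn
  have hD : (1 : ℂ) - ⟪ν, μ⟫ ≠ 0 := one_sub_inner_ne_zero hμ hν
  have hnorm : (⟪n, n⟫ : ℂ)
      = ((‖(1 : ℂ) - ⟪ν, μ⟫‖ ^ 2 - (1 - ‖μ‖ ^ 2) * (1 - ‖ν‖ ^ 2) : ℝ) : ℂ) := by
    rw [hn, ball_key ν hν.le μ μ, inner_self_c μ]
    have hconj : (1 : ℂ) - ⟪μ, ν⟫ = (starRingEnd ℂ) ((1 : ℂ) - ⟪ν, μ⟫) := by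
      simp [inner_conj_symm]
    rw [hconj, conj_mul_c]
    push_cast
    ring
  have hreal : ‖n‖^2 = ‖(1 : ℂ) - ⟪ν, μ⟫‖ ^ 2 - (1 - ‖μ‖ ^ 2) * (1 - ‖ν‖ ^ 2) := by
    rw [inner_self_c n] at hnorm
    exact_mod_cast hnorm
  have hpd : pseudohyperbolicDist μ ν = ‖(1 : ℂ) - ⟪ν, μ⟫‖⁻¹ * ‖n‖ := by
    rw [pseudohyperbolicDist, ballMobius, norm_smul, norm_inv]
  have hDn : ‖(1 : ℂ) - ⟪ν, μ⟫‖ ≠ 0 := norm_ne_zero_iff.mpr hD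
  rw [hpd, mul_pow, hreal]
  calc ‖(1 : ℂ) - ⟪ν, μ⟫‖⁻¹ ^ 2 * (‖(1 : ℂ) - ⟪ν, μ⟫‖ ^ 2 - (1 - ‖μ‖ ^ 2) * (1 - ‖ν‖ ^ 2))
        * ‖(1 : ℂ) - ⟪ν, μ⟫‖ ^ 2
      = (‖(1 : ℂ) - ⟪ν, μ⟫‖ ^ 2 - (1 - ‖μ‖ ^ 2) * (1 - ‖ν‖ ^ 2))
        * (‖(1 : ℂ) - ⟪ν, μ⟫‖ ^ 2 * (‖(1 : ℂ) - ⟪ν, μ⟫‖ ^ 2)⁻¹) := by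
        rw [inv_pow]; ring
    _ = _ := by rw [mul_inv_cancel₀ (pow_ne_zero 2 hDn), mul_one]

lemma pd_lt_one {μ ν : H} (hμ : ‖μ‖ < 1) (hν : ‖ν‖ < 1) :
    pseudohyperbolicDist μ ν < 1 := by
  have h := norm_sq_mobius hμ hν
  have hDn : (0:ℝ) < ‖(1 : ℂ) - ⟪ν, μ⟫‖ :=
    norm_pos_iff.mpr (one_sub_inner_ne_zero hμ hν)
  have hB : (0:ℝ) < ‖(1 : ℂ) - ⟪ν, μ⟫‖^2 := by positivity
  have hpos : (0:ℝ) < (1 - ‖μ‖ ^ 2) * (1 - ‖ν‖ ^ 2) :=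
    mul_pos (by nlinarith [norm_nonneg μ]) (by nlinarith [norm_nonneg ν])
  have hd0 : (0:ℝ) ≤ pseudohyperbolicDist μ ν := norm_nonneg _
  have h2 : pseudohyperbolicDist μ ν ^ 2 * ‖(1 : ℂ) - ⟪ν, μ⟫‖^2
      < ‖(1 : ℂ) - ⟪ν, μ⟫‖^2 := by linarith
  have h3 : pseudohyperbolicDist μ ν ^ 2 < 1 := by
    by_contra hc
    push_neg at hc
    nlinarith
  nlinarith

lemma pd_symm' {μ ν : H} (hμ : ‖μ‖ < 1) (hν : ‖ν‖ < 1) :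
    pseudohyperbolicDist μ ν = pseudohyperbolicDist ν μ := by
  have h1 := norm_sq_mobius hμ hν
  have h2 := norm_sq_mobius hν hμ
  rw [norm_one_sub_inner_symm μ ν] at h2
  have hDn : (0:ℝ) < ‖(1 : ℂ) - ⟪ν, μ⟫‖ :=
    norm_pos_iff.mpr (one_sub_inner_ne_zero hμ hν)
  have hsq : pseudohyperbolicDist μ ν ^ 2 = pseudohyperbolicDist ν μ ^ 2 := by
    have hB : ‖(1 : ℂ) - ⟪ν, μ⟫‖^2 ≠ 0 := by positivity
    apply mul_right_cancel₀ hB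
    rw [h1, h2]; ring
  exact real_sq_eq (norm_nonneg _) (norm_nonneg _) hsq

lemma pd_self (ν : H) : pseudohyperbolicDist ν ν = 0 := by
  by_cases h0 : ν = 0
  · simp [pseudohyperbolicDist, ballMobius, ballProj, h0]
  · have hne : (⟪ν, ν⟫ : ℂ) ≠ 0 := by
      rw [inner_self_eq_norm_sq_to_K]
      simpa using (norm_ne_zero_iff.mpr h0)
    have hproj : ballProj ν ν = ν := by
      rw [ballProj, if_neg h0, div_self hne, one_smul]
    simp [pseudohyperbolicDist, ballMobius, hproj]

private lemma complex_norm_sq (w : ℂ) : ‖w‖^2 = w.re^2 + w.im^2 := by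
  rw [Complex.sq_norm, Complex.normSq_apply]; ring

lemma pd_eq_zero {μ ν : H} (hμ : ‖μ‖ < 1) (hν : ‖ν‖ < 1)
    (h : pseudohyperbolicDist μ ν = 0) : μ = ν := by
  have hf := norm_sq_mobius hμ hν
  rw [h] at hf
  set z : ℂ := ⟪ν, μ⟫ with hz
  have hnormz : ‖z‖ ≤ ‖ν‖ * ‖μ‖ := norm_inner_le_norm ν μ
  have hB2 : ‖(1:ℂ) - z‖^2 = (1 - z.re)^2 + z.im^2 := by
    rw [complex_norm_sq]
    simp [Complex.sub_re, Complex.sub_im]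
  have hxle : z.re ≤ ‖ν‖ * ‖μ‖ := by
    have h1 : |z.re| ≤ ‖z‖ := by
      exact Complex.abs_re_le_norm z
    calc z.re ≤ |z.re| := le_abs_self _
    _ ≤ ‖z‖ := h1
    _ ≤ _ := hnormz
  have hab1 : ‖ν‖ * ‖μ‖ < 1 := by nlinarith [norm_nonneg μ, norm_nonneg ν]
  have hzero : (z.re - ‖ν‖*‖μ‖)^2 + z.im^2 + (‖μ‖-‖ν‖)^2
      + 2*(1-‖ν‖*‖μ‖)*(‖ν‖*‖μ‖-z.re) = 0 := by
    rw [hB2] at hf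
    linear_combination -hf
  have t4 : 0 ≤ 2*(1-‖ν‖*‖μ‖)*(‖ν‖*‖μ‖-z.re) := by
    apply mul_nonneg (by linarith) (by linarith)
  have him : z.im = 0 := by
    have : z.im^2 = 0 := by
      nlinarith [sq_nonneg (z.re - ‖ν‖*‖μ‖), sq_nonneg (‖μ‖-‖ν‖), sq_nonneg z.im]
    exact pow_eq_zero_iff (by norm_num) |>.mp this
  have hre : z.re = ‖ν‖*‖μ‖ := by
    have : (z.re - ‖ν‖*‖μ‖)^2 = 0 := by
      nlinarith [sq_nonneg (z.re - ‖ν‖*‖μ‖), sq_nonneg (‖μ‖-‖ν‖), sq_nonneg z.im]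
    have := pow_eq_zero_iff (n := 2) (by norm_num) |>.mp this
    linarith [sub_eq_zero.mp this]
  have habeq : ‖μ‖ = ‖ν‖ := by
    have : (‖μ‖-‖ν‖)^2 = 0 := by
      nlinarith [sq_nonneg (z.re - ‖ν‖*‖μ‖), sq_nonneg (‖μ‖-‖ν‖), sq_nonneg z.im]
    have := pow_eq_zero_iff (n := 2) (by norm_num) |>.mp this
    linarith [sub_eq_zero.mp this]
  have hinner : (⟪ν, μ⟫ : ℂ) = (‖ν‖ : ℂ) * (‖μ‖ : ℂ) := by
    rw [← hz]
    apply Complex.ext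
    · simp [hre]
    · simp [him]
  have hsmul : (‖μ‖ : ℂ) • ν = (‖ν‖ : ℂ) • μ := inner_eq_norm_mul_iff.mp hinner
  by_cases hμ0 : μ = 0
  · have : ‖ν‖ = 0 := by rw [← habeq, hμ0, norm_zero]
    rw [hμ0, norm_eq_zero.mp this]
  · have hcne : (‖μ‖ : ℂ) ≠ 0 := by
      simpa using norm_ne_zero_iff.mpr hμ0
    rw [habeq] at hsmul
    have : (‖ν‖ : ℂ) ≠ 0 := by rw [← habeq]; exact hcne
    exact (smul_right_injective H this hsmul).symm

/-- The Möbius inner product identity. -/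
lemma mobius_inner {μ ν lam : H} (hμ : ‖μ‖ < 1) (hν : ‖ν‖ < 1) (hlam : ‖lam‖ < 1) :
    (1 - ⟪ballMobius ν μ, ballMobius ν lam⟫) * ((1 - ⟪μ, ν⟫) * (1 - ⟪ν, lam⟫))
      = (1 - (‖ν‖:ℂ)^2) * (1 - ⟪μ, lam⟫) := by
  have hDμ : (1:ℂ) - ⟪ν, μ⟫ ≠ 0 := one_sub_inner_ne_zero hμ hν
  have hDlam : (1:ℂ) - ⟪ν, lam⟫ ≠ 0 := one_sub_inner_ne_zero hlam hν
  have hDμ' : (1:ℂ) - ⟪μ, ν⟫ ≠ 0 := by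
    intro hc
    apply hDμ
    have := congrArg (starRingEnd ℂ) hc
    simpa [inner_conj_symm] using this
  rw [ballMobius, ballMobius, inner_smul_left, inner_smul_right,
    ball_key ν hν.le μ lam, map_inv₀]
  have hc : (starRingEnd ℂ) ((1:ℂ) - ⟪ν, μ⟫) = (1:ℂ) - ⟪μ, ν⟫ := by
    simp [inner_conj_symm]
  rw [hc]
  field_simp
  ring

/-- Möbius invariance of the pseudohyperbolic distance. -/
lemma pd_invariance {μ ν lam : H} (hμ : ‖μ‖ < 1) (hν : ‖ν‖ < 1) (hlam : ‖lam‖ < 1) :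
    pseudohyperbolicDist (ballMobius ν μ) (ballMobius ν lam) = pseudohyperbolicDist μ lam := by
  set x : H := ballMobius ν μ with hxd
  set y : H := ballMobius ν lam with hyd
  have hx : ‖x‖ < 1 := pd_lt_one hμ hν
  have hy : ‖y‖ < 1 := pd_lt_one hlam hν
  have hnx : ‖x‖ = pseudohyperbolicDist μ ν := rfl
  have hny : ‖y‖ = pseudohyperbolicDist lam ν := rfl
  set P := pseudohyperbolicDist μ ν with hP
  set Q := pseudohyperbolicDist lam ν with hQ
  set R := pseudohyperbolicDist μ lam with hR
  set S := pseudohyperbolicDist x y with hS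
  set A1 := ‖(1:ℂ) - ⟪ν, μ⟫‖ with hA1
  set A2 := ‖(1:ℂ) - ⟪ν, lam⟫‖ with hA2
  set A3 := ‖(1:ℂ) - ⟪lam, μ⟫‖ with hA3
  set B := ‖(1:ℂ) - ⟪y, x⟫‖ with hB
  have e1 : P^2 * A1^2 = A1^2 - (1 - ‖μ‖^2) * (1 - ‖ν‖^2) := norm_sq_mobius hμ hν
  have e2 : Q^2 * A2^2 = A2^2 - (1 - ‖lam‖^2) * (1 - ‖ν‖^2) := norm_sq_mobius hlam hν
  have e3 : R^2 * A3^2 = A3^2 - (1 - ‖μ‖^2) * (1 - ‖lam‖^2) := norm_sq_mobius hμ hlam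
  have e4 : S^2 * B^2 = B^2 - (1 - ‖x‖^2) * (1 - ‖y‖^2) := norm_sq_mobius hx hy
  rw [hnx, hny] at e4
  -- norms of the Möbius inner identity
  have e5 : B * (A1 * A2) = (1 - ‖ν‖^2) * A3 := by
    have h5 := congrArg norm (mobius_inner hμ hν hlam)
    rw [norm_mul, norm_mul, norm_mul] at h5
    have hb1 : ‖(1:ℂ) - ⟪x, y⟫‖ = B := (norm_one_sub_inner_symm x y)
    have hb2 : ‖(1:ℂ) - ⟪μ, ν⟫‖ = A1 := norm_one_sub_inner_symm μ ν
    have hb3 : ‖(1:ℂ) - ⟪μ, lam⟫‖ = A3 := norm_one_sub_inner_symm μ lam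
    have hb4 : ‖(1:ℂ) - (‖ν‖:ℂ)^2‖ = 1 - ‖ν‖^2 := by
      rw [show (1:ℂ) - (‖ν‖:ℂ)^2 = ((1 - ‖ν‖^2 : ℝ) : ℂ) by push_cast; ring,
        Complex.norm_real]
      exact abs_of_nonneg (by nlinarith [norm_nonneg ν])
    rw [hb1, hb2, hb3, hb4] at h5
    exact h5
  have hA3pos : (0:ℝ) < A3 := norm_pos_iff.mpr (one_sub_inner_ne_zero hμ hlam)
  have hν2pos : (0:ℝ) < 1 - ‖ν‖^2 := by nlinarith [norm_nonneg ν]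
  have e12 : ((1 - P^2) * A1^2) * ((1 - Q^2) * A2^2)
      = ((1 - ‖μ‖^2) * (1 - ‖ν‖^2)) * ((1 - ‖lam‖^2) * (1 - ‖ν‖^2)) := by
    have l1 : (1 - P^2) * A1^2 = (1 - ‖μ‖^2) * (1 - ‖ν‖^2) := by linear_combination -e1
    have l2 : (1 - Q^2) * A2^2 = (1 - ‖lam‖^2) * (1 - ‖ν‖^2) := by linear_combination -e2
    rw [l1, l2]
  have e5sq : (B * (A1 * A2))^2 = ((1 - ‖ν‖^2) * A3)^2 := by rw [e5]
  have step : S^2 * ((1 - ‖ν‖^2) * A3)^2 = R^2 * ((1 - ‖ν‖^2) * A3)^2 := by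
    calc S^2 * ((1 - ‖ν‖^2) * A3)^2 = S^2 * (B * (A1 * A2))^2 := by rw [e5sq]
    _ = (B * (A1 * A2))^2 - ((1 - P^2) * A1^2) * ((1 - Q^2) * A2^2) := by
        linear_combination (A1^2 * A2^2) * e4
    _ = ((1 - ‖ν‖^2) * A3)^2
        - ((1 - ‖μ‖^2) * (1 - ‖ν‖^2)) * ((1 - ‖lam‖^2) * (1 - ‖ν‖^2)) := by
        rw [e5sq, e12]
    _ = R^2 * ((1 - ‖ν‖^2) * A3)^2 := by linear_combination -(1 - ‖ν‖^2)^2 * e3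
  have hfac : ((1 - ‖ν‖^2) * A3)^2 ≠ 0 := pow_ne_zero 2 (ne_of_gt (mul_pos hν2pos hA3pos))
  have hsq : S^2 = R^2 := mul_right_cancel₀ hfac step
  exact real_sq_eq (norm_nonneg _) (norm_nonneg _) hsq

set_option maxHeartbeats 1000000 in
/-- `d(x,y) ≤ ‖x‖ + ‖y‖` for points of the ball. -/
lemma pd_le_add_norm {x y : H} (hx : ‖x‖ < 1) (hy : ‖y‖ < 1) :
    pseudohyperbolicDist x y ≤ ‖x‖ + ‖y‖ := by
  have h := norm_sq_mobius hx hy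
  set d := pseudohyperbolicDist x y with hd
  set a := ‖x‖ with ha
  set b := ‖y‖ with hb
  set B := ‖(1:ℂ) - ⟪y, x⟫‖ with hBd
  have hBpos : (0:ℝ) < B := norm_pos_iff.mpr (one_sub_inner_ne_zero hx hy)
  have hBle : B ≤ 1 + b * a := by
    calc B ≤ ‖(1:ℂ)‖ + ‖(⟪y, x⟫ : ℂ)‖ := norm_sub_le _ _
    _ ≤ 1 + b * a := by
        simp only [norm_one]
        exact add_le_add_right (norm_inner_le_norm (𝕜 := ℂ) y x) 1
  have ha0 : 0 ≤ a := norm_nonneg _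
  have hb0 : 0 ≤ b := norm_nonneg _
  have hd0 : 0 ≤ d := norm_nonneg _
  have key : (d^2 * (1 + a*b)^2 - (a+b)^2) * B^2
      = (1 - a^2) * (1 - b^2) * (B^2 - (1 + a*b)^2) := by
    linear_combination (1 + a*b)^2 * h
  have hs1 : (0:ℝ) < (1 - a^2) := by nlinarith
  have hs2 : (0:ℝ) < (1 - b^2) := by nlinarith
  have hBle2 : B^2 ≤ (1 + a*b)^2 := by nlinarith
  have hkey2 : (d^2 * (1 + a*b)^2 - (a+b)^2) * B^2 ≤ 0 := by
    rw [key]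
    apply mul_nonpos_of_nonneg_of_nonpos (by positivity)
    linarith
  have hd2 : d^2 * (1 + a*b)^2 ≤ (a+b)^2 := by nlinarith [mul_pos hBpos hBpos]
  have h1ab : 1 ≤ (1 + a*b)^2 := by nlinarith [mul_nonneg ha0 hb0]
  have hd3 : d^2 ≤ (a+b)^2 := by
    nlinarith [mul_le_mul_of_nonneg_left h1ab (sq_nonneg d)]
  nlinarith [hd3, hd0, ha0, hb0, sq_nonneg (d - (a+b)), sq_nonneg (d + (a+b))]

theorem pseudohyperbolicDist_isMetric :
    ∀ μ ∈ ball (0 : H) 1, ∀ ν ∈ ball (0 : H) 1,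
      pseudohyperbolicDist μ ν = pseudohyperbolicDist ν μ ∧
      (pseudohyperbolicDist μ ν = 0 ↔ μ = ν) ∧
      ∀ lam ∈ ball (0 : H) 1,
        pseudohyperbolicDist μ lam ≤ pseudohyperbolicDist μ ν + pseudohyperbolicDist ν lam := by
  intro μ hμ ν hν
  rw [mem_ball_zero_iff] at hμ hν
  refine ⟨pd_symm' hμ hν, ⟨pd_eq_zero hμ hν, fun h => by rw [h]; exact pd_self ν⟩, ?_⟩
  intro lam hlam
  rw [mem_ball_zero_iff] at hlam
  calc pseudohyperbolicDist μ lam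
      = pseudohyperbolicDist (ballMobius ν μ) (ballMobius ν lam) :=
        (pd_invariance hμ hν hlam).symm
    _ ≤ ‖ballMobius ν μ‖ + ‖ballMobius ν lam‖ :=
        pd_le_add_norm (pd_lt_one hμ hν) (pd_lt_one hlam hν)
    _ = pseudohyperbolicDist μ ν + pseudohyperbolicDist ν lam := by
        rw [show ‖ballMobius ν lam‖ = pseudohyperbolicDist lam ν from rfl,
          pd_symm' hlam hν]
        rfl

end
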